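/- Let σ be the symmetric 3-tensor on ℝⁿ (n = k+1) defined by σ₁₁₁ = kλ, σ_{1ll} = −λ for 2 ≤ l ≤ n (together with all permutations of indices), and all other components zero, where λ = 1/√n. Then the fundamental matrix S_{ij} = ∑_{p,q} σ_{ipq} σ_{jpq} has eigenvalues λ₁ = λ²(n−1)n = (n−1) and λ₂ = … = λₙ = 2λ² = 2/n; moreover the trace tr S plus λ₂ equals n + 1. -/
import Mathlib


/-- For the symmetric 3-tensor σ on ℝⁿ (n ≥ 2) with σ₁₁₁ = (n−1)λ,
σ_{1ll} = −λ for l ≥ 2 (and full symmetry), all other components zero,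
where λ = 1/√n: the fundamental matrix S_{ij} = ∑_{p,q} σ_{ipq}σ_{jpq} is
diagonal with eigenvalues λ₁ = n−1 and λ₂ = … = λₙ = 2/n, and
tr S + λ₂ = n + 1. (Indices are 0-based.) -/
theorem calabi_fundamental_matrix (n : ℕ) (hn : 2 ≤ n) (lam : ℝ)
    (hlam : lam = 1 / Real.sqrt n)
    (σ : Fin n → Fin n → Fin n → ℝ)
    (hsym1 : ∀ i j k, σ i j k = σ j i k)
    (hsym2 : ∀ i j k, σ i j k = σ i k j)
    (h111 : σ ⟨0, by omega⟩ ⟨0, by omega⟩ ⟨0, by omega⟩ = (n - 1) * lam)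
    (h1ll : ∀ l : Fin n, l ≠ ⟨0, by omega⟩ → σ ⟨0, by omega⟩ l l = -lam)
    (hzero : ∀ i j k : Fin n,
      ¬((i = ⟨0, by omega⟩ ∧ j = k) ∨ (j = ⟨0, by omega⟩ ∧ i = k) ∨
        (k = ⟨0, by omega⟩ ∧ i = j)) → σ i j k = 0)
    (S : Matrix (Fin n) (Fin n) ℝ)
    (hS : ∀ i j, S i j = ∑ p, ∑ q, σ i p q * σ j p q) :
    (∀ i j, i ≠ j → S i j = 0) ∧
    S ⟨0, by omega⟩ ⟨0, by omega⟩ = n - 1 ∧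
    (∀ i : Fin n, i ≠ ⟨0, by omega⟩ → S i i = 2 / n) ∧
    Matrix.trace S + 2 / n = n + 1 := by
  have hn0 : (0:ℝ) < n := by positivity
  have hnpos : 0 < n := by omega
  set e0 : Fin n := ⟨0, hnpos⟩ with he0
  have hl2 : lam * lam = 1 / n := by
    rw [hlam, div_mul_div_comm, one_mul, Real.mul_self_sqrt (by positivity)]
  -- off-diagonal products vanish
  have hmul : ∀ i j p q : Fin n, i ≠ j → σ i p q * σ j p q = 0 := by
    intro i j p q hij
    by_cases h1 : σ i p q = 0
    · simp [h1]
    · have hc : (i = e0 ∧ p = q) ∨ (p = e0 ∧ i = q) ∨ (q = e0 ∧ i = p) := by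
        by_contra hc; exact h1 (hzero i p q hc)
      have h2 : σ j p q = 0 := by
        apply hzero
        rintro (⟨hj, hpq⟩ | ⟨hp, hjq⟩ | ⟨hq, hjp⟩) <;>
          rcases hc with ⟨h1a, h1b⟩ | ⟨h1a, h1b⟩ | ⟨h1a, h1b⟩ <;>
          subst_vars <;> simp_all
      simp [h2]
  have hoff : ∀ i j, i ≠ j → S i j = 0 := by
    intro i j hij
    rw [hS]
    exact Finset.sum_eq_zero fun p _ => Finset.sum_eq_zero fun q _ => hmul i j p q hij
  -- σ 0 p q vanishes off the diagonal
  have hσ0 : ∀ p q : Fin n, p ≠ q → σ e0 p q = 0 := by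
    intro p q hpq
    apply hzero
    rintro (⟨_, h⟩ | ⟨hp, hq⟩ | ⟨hq, hp⟩)
    · exact hpq h
    · exact hpq (hp.trans hq)
    · exact hpq (hp.symm.trans hq.symm)
  -- support of σ i for i ≠ 0
  have hσi : ∀ i p q : Fin n, i ≠ e0 → ¬(p = e0 ∧ q = i) → ¬(p = i ∧ q = e0) →
      σ i p q = 0 := by
    intro i p q hi h1 h2
    apply hzero
    rintro (⟨h, _⟩ | ⟨hp, hq⟩ | ⟨hq, hp⟩)
    · exact hi h
    · exact h1 ⟨hp, hq.symm⟩
    · exact h2 ⟨hp.symm, hq⟩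
  have hval1 : ∀ i : Fin n, i ≠ e0 → σ i e0 i = -lam := by
    intro i hi; rw [hsym1]; exact h1ll i hi
  have hval2 : ∀ i : Fin n, i ≠ e0 → σ i i e0 = -lam := by
    intro i hi; rw [hsym2, hsym1]; exact h1ll i hi
  -- S 0 0
  have hS00 : S e0 e0 = (n:ℝ) - 1 := by
    rw [hS]
    have hinner : ∀ p : Fin n, (∑ q, σ e0 p q * σ e0 p q) = σ e0 p p * σ e0 p p := by
      intro p
      apply Finset.sum_eq_single p
      · intro q _ hq
        rw [hσ0 p q (fun h => hq h.symm)]; ring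
      · intro h; exact absurd (Finset.mem_univ p) h
    rw [Finset.sum_congr rfl fun p _ => hinner p]
    rw [← Finset.add_sum_erase _ _ (Finset.mem_univ e0)]
    have hrest : ∑ p ∈ Finset.univ.erase e0, σ e0 p p * σ e0 p p
        = (n - 1 : ℕ) * (lam * lam) := by
      have hcg : ∀ p ∈ Finset.univ.erase e0, σ e0 p p * σ e0 p p = lam * lam := by
        intro p hp; rw [h1ll p (Finset.mem_erase.mp hp).1]; ring
      rw [Finset.sum_congr rfl hcg, Finset.sum_const,
        Finset.card_erase_of_mem (Finset.mem_univ e0),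
        Finset.card_univ, Fintype.card_fin, nsmul_eq_mul]
    rw [h111, hrest]
    have hne : (n:ℝ) ≠ 0 := hn0.ne'
    have hl2' : lam * lam * n = 1 := by rw [hl2]; field_simp
    push_cast [Nat.cast_sub (by omega : 1 ≤ n)]
    linear_combination ((n:ℝ) - 1) * hl2'
  -- S i i for i ≠ 0
  have hSii : ∀ i : Fin n, i ≠ e0 → S i i = 2 / n := by
    intro i hi
    rw [hS, ← Finset.sum_product']
    have hsub := Finset.sum_subset
      (f := fun x : Fin n × Fin n => σ i x.1 x.2 * σ i x.1 x.2)
      (Finset.subset_univ ({(e0, i), (i, e0)} : Finset (Fin n × Fin n)))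
      (fun x _ hx => by
        simp only [Finset.mem_insert, Finset.mem_singleton, Prod.ext_iff] at hx
        push_neg at hx
        exact mul_eq_zero_of_left
          (hσi i x.1 x.2 hi (fun h => hx.1 h.1 h.2) (fun h => hx.2 h.1 h.2)) _)
    rw [Finset.univ_product_univ, ← hsub,
      Finset.sum_pair (fun h => hi (congrArg Prod.snd h))]
    show σ i e0 i * σ i e0 i + σ i i e0 * σ i i e0 = 2 / n
    rw [hval1 i hi, hval2 i hi]
    linear_combination 2 * hl2
  refine ⟨hoff, hS00, hSii, ?_⟩
  -- trace
  have htr : Matrix.trace S = ∑ i, S i i := rfl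
  rw [htr, ← Finset.add_sum_erase _ _ (Finset.mem_univ e0), hS00]
  have hrest : ∑ i ∈ Finset.univ.erase e0, S i i = (n - 1 : ℕ) * (2 / n) := by
    rw [Finset.sum_congr rfl fun i hi => hSii i (Finset.mem_erase.mp hi).1]
    rw [Finset.sum_const, Finset.card_erase_of_mem (Finset.mem_univ e0),
      Finset.card_univ, Fintype.card_fin, nsmul_eq_mul]
  rw [hrest]
  push_cast [Nat.cast_sub (by omega : 1 ≤ n)]
  field_simp
  ring
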